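/- arXiv:1906.08799 — 2 statements merged into one kernel-verified Lean document; each statement's English description precedes it below -/
import Mathlib

section
/- For all real numbers a > 0 and b > 0, (√a − √b)² ≤ (1/4)·max(a,b)·(log(a/b))². -/
lemma stmt_5_aux (a b : ℝ) (ha : 0 < a) (hb : 0 < b) (hab : b ≤ a) :
    (Real.sqrt a - Real.sqrt b) ^ 2 ≤ (1 / 4) * a * Real.log (a / b) ^ 2 := by
  set s := Real.sqrt a with hs
  set t := Real.sqrt b with ht
  have hs0 : 0 < s := Real.sqrt_pos.mpr ha
  have ht0 : 0 < t := Real.sqrt_pos.mpr hb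
  have hst : t ≤ s := Real.sqrt_le_sqrt hab
  have hlog : Real.log (a / b) = 2 * Real.log (s / t) := by
    rw [Real.log_div (ne_of_gt ha) (ne_of_gt hb), Real.log_div (ne_of_gt hs0) (ne_of_gt ht0),
      hs, ht, Real.log_sqrt ha.le, Real.log_sqrt hb.le]
    ring
  have hlognn : 0 ≤ Real.log (s / t) :=
    Real.log_nonneg (by rw [le_div_iff₀ ht0]; simpa using hst)
  have key : s - t ≤ s * Real.log (s / t) := by
    have h1 : Real.log (t / s) ≤ t / s - 1 := Real.log_le_sub_one_of_pos (by positivity)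
    have h2 : 1 - t / s ≤ Real.log (s / t) := by
      have : Real.log (s / t) = -Real.log (t / s) := by
        rw [← Real.log_inv]; congr 1; field_simp
      linarith [this ▸ neg_le_neg h1]
    calc s - t = s * (1 - t / s) := by field_simp
    _ ≤ s * Real.log (s / t) := by
        exact mul_le_mul_of_nonneg_left h2 hs0.le
  have hst' : 0 ≤ s - t := sub_nonneg.mpr hst
  have hsq : (s - t) ^ 2 ≤ (s * Real.log (s / t)) ^ 2 :=
    pow_le_pow_left₀ hst' key 2
  have ha' : s ^ 2 = a := Real.sq_sqrt ha.le
  calc (s - t) ^ 2 ≤ (s * Real.log (s / t)) ^ 2 := hsq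
  _ = (1 / 4) * s ^ 2 * (2 * Real.log (s / t)) ^ 2 := by ring
  _ = (1 / 4) * a * Real.log (a / b) ^ 2 := by rw [ha', hlog]

/-- For `a, b > 0`, `(√a − √b)² ≤ (1/4)·max(a,b)·(log(a/b))²`. -/
theorem stmt_5 (a b : ℝ) (ha : 0 < a) (hb : 0 < b) :
    (Real.sqrt a - Real.sqrt b) ^ 2 ≤ (1 / 4) * max a b * Real.log (a / b) ^ 2 := by
  rcases le_total b a with h | h
  · rw [max_eq_left h]
    exact stmt_5_aux a b ha hb h
  · rw [max_eq_right h]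
    have := stmt_5_aux b a hb ha h
    have hlog : Real.log (a / b) ^ 2 = Real.log (b / a) ^ 2 := by
      rw [show a / b = (b / a)⁻¹ by field_simp, Real.log_inv, neg_pow]
      ring
    rw [hlog]
    calc (Real.sqrt a - Real.sqrt b) ^ 2 = (Real.sqrt b - Real.sqrt a) ^ 2 := by ring
    _ ≤ (1 / 4) * b * Real.log (b / a) ^ 2 := this
end

section
/- Let d and n be positive integers, let 0 < m ≤ M < ∞, let λ, λ' : [0,1]^d → [m,M] be measurable, and let γ₁,…,γₙ : [0,1]^d → [0,1] be measurable. Then (1/n)·∑_{i=1}^n [ ∫_{[0,1]^d} γᵢ(x)·(λ(x) − λ'(x)) dx + ∫_{[0,1]^d} γᵢ(x)·λ'(x)·log(λ'(x)/λ(x)) dx ] ≤ (3/n)·∑_{i=1}^n ∫_{[0,1]^d} γᵢ(x)·(√(λ(x)) − √(λ'(x)))² dx + (1/n)·∑_{i=1}^n ∫_{[0,1]^d} γᵢ(x)·λ'(x)·(log(λ'(x)/λ(x)))² dx. -/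
open MeasureTheory Real

private lemma core_ineq (u : ℝ) : 0 ≤ 2*(exp u)^2 - 6*exp u + 4*u^2 + 2*u + 4 := by
  have h1 : u + 1 ≤ exp u := add_one_le_exp u
  have h2 : -u + 1 ≤ exp (-u) := add_one_le_exp (-u)
  have h3 : exp u * exp (-u) = 1 := by rw [← exp_add]; simp
  have hp : 0 < exp u := exp_pos u
  nlinarith [sq_nonneg (exp u - 1 - u), sq_nonneg (exp u - 1), sq_nonneg u, mul_pos hp hp,
    mul_le_mul_of_nonneg_left h2 hp.le]

private lemma ptwise (a b g : ℝ) (ha : 0 < a) (hb : 0 < b) (hg : 0 ≤ g) :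
    g * (a - b) + g * b * Real.log (b / a)
      ≤ 3 * (g * (Real.sqrt a - Real.sqrt b) ^ 2) + g * b * Real.log (b / a) ^ 2 := by
  set u : ℝ := Real.log (a / b) / 2 with hu
  have hab : 0 < a / b := div_pos ha hb
  have h2u : exp (2 * u) = a / b := by
    rw [hu]; rw [show 2 * (Real.log (a/b) / 2) = Real.log (a/b) by ring, exp_log hab]
  have haeq : a = b * exp (2 * u) := by
    rw [h2u]; field_simp
  have hX : exp (2 * u) = exp u * exp u := by rw [two_mul, exp_add]
  have hsq : Real.sqrt a = Real.sqrt b * exp u := by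
    rw [haeq, Real.sqrt_mul hb.le, hX, ← sq, Real.sqrt_sq (exp_pos u).le]
  have hlog : Real.log (b / a) = -(2 * u) := by
    have h : b / a = (a / b)⁻¹ := by rw [inv_div]
    rw [h, Real.log_inv, hu]; ring
  have hsb : Real.sqrt b ^ 2 = b := Real.sq_sqrt hb.le
  have hgb : 0 ≤ g * b := mul_nonneg hg hb.le
  have hc := core_ineq u
  have key : 0 ≤ (g * b) * (2*(exp u)^2 - 6*exp u + 4*u^2 + 2*u + 4) := mul_nonneg hgb hc
  have expand : (Real.sqrt b * exp u - Real.sqrt b) ^ 2 = b * (exp u - 1) ^ 2 := by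
    calc (Real.sqrt b * exp u - Real.sqrt b) ^ 2
        = Real.sqrt b ^ 2 * (exp u - 1) ^ 2 := by ring
      _ = b * (exp u - 1) ^ 2 := by rw [hsb]
  rw [hlog, hsq, haeq, hX, expand]
  nlinarith [key]

/-- The averaged Kullback–Leibler divergence between filtered Poisson process laws is bounded
by three times the averaged squared Hellinger-type `L²` distance of root rate functions plus
the averaged variance measure (inequality (lem1.2) of the paper). -/
theorem stmt_7 (d n : ℕ) (hd : 0 < d) (hn : 0 < n) (m M : ℝ) (hm : 0 < m) (hmM : m ≤ M)
    (lam lam' : (Fin d → ℝ) → ℝ) (hml : Measurable lam) (hml' : Measurable lam')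
    (hbd : ∀ x ∈ Set.Icc (0 : Fin d → ℝ) 1, lam x ∈ Set.Icc m M)
    (hbd' : ∀ x ∈ Set.Icc (0 : Fin d → ℝ) 1, lam' x ∈ Set.Icc m M)
    (γ : Fin n → (Fin d → ℝ) → ℝ) (hγm : ∀ i, Measurable (γ i))
    (hγ : ∀ i, ∀ x ∈ Set.Icc (0 : Fin d → ℝ) 1, γ i x ∈ Set.Icc (0 : ℝ) 1) :
    (1 / n : ℝ) * ∑ i : Fin n,
        ((∫ x in Set.Icc (0 : Fin d → ℝ) 1, γ i x * (lam x - lam' x)) +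
          ∫ x in Set.Icc (0 : Fin d → ℝ) 1, γ i x * lam' x * Real.log (lam' x / lam x))
      ≤ (3 / n : ℝ) * ∑ i : Fin n,
          (∫ x in Set.Icc (0 : Fin d → ℝ) 1,
            γ i x * (Real.sqrt (lam x) - Real.sqrt (lam' x)) ^ 2) +
        (1 / n : ℝ) * ∑ i : Fin n,
          ∫ x in Set.Icc (0 : Fin d → ℝ) 1,
            γ i x * lam' x * Real.log (lam' x / lam x) ^ 2 := by
  set S : Set (Fin d → ℝ) := Set.Icc 0 1 with hSdef
  have hS : MeasurableSet S := measurableSet_Icc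
  have hSfin : volume S ≠ ⊤ := (isCompact_Icc.measure_lt_top).ne
  -- bounds on the set
  have hK : ∀ x ∈ S, |Real.log (lam' x / lam x)| ≤ |Real.log m| + |Real.log M| + (|Real.log m| + |Real.log M|) := by
    intro x hx
    obtain ⟨h1, h2⟩ := hbd x hx
    obtain ⟨h1', h2'⟩ := hbd' x hx
    have hlx : 0 < lam x := lt_of_lt_of_le hm h1
    have hlx' : 0 < lam' x := lt_of_lt_of_le hm h1'
    rw [Real.log_div hlx'.ne' hlx.ne']
    have b1 : |Real.log (lam' x)| ≤ |Real.log m| + |Real.log M| := by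
      rw [abs_le]
      constructor
      · calc -(|Real.log m| + |Real.log M|) ≤ -|Real.log m| := by nlinarith [abs_nonneg (Real.log M)]
          _ ≤ Real.log m := neg_abs_le _
          _ ≤ Real.log (lam' x) := Real.log_le_log hm h1'
      · calc Real.log (lam' x) ≤ Real.log M := Real.log_le_log hlx' h2'
          _ ≤ |Real.log M| := le_abs_self _
          _ ≤ |Real.log m| + |Real.log M| := by nlinarith [abs_nonneg (Real.log m)]
    have b2 : |Real.log (lam x)| ≤ |Real.log m| + |Real.log M| := by
      rw [abs_le]
      constructor
      · calc -(|Real.log m| + |Real.log M|) ≤ -|Real.log m| := by nlinarith [abs_nonneg (Real.log M)]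
          _ ≤ Real.log m := neg_abs_le _
          _ ≤ Real.log (lam x) := Real.log_le_log hm h1
      · calc Real.log (lam x) ≤ Real.log M := Real.log_le_log hlx h2
          _ ≤ |Real.log M| := le_abs_self _
          _ ≤ |Real.log m| + |Real.log M| := by nlinarith [abs_nonneg (Real.log m)]
    calc |Real.log (lam' x) - Real.log (lam x)| ≤ |Real.log (lam' x)| + |Real.log (lam x)| := abs_sub _ _
      _ ≤ _ := add_le_add b1 b2
  set K : ℝ := |Real.log m| + |Real.log M| + (|Real.log m| + |Real.log M|) with hKdef
  have hK0 : 0 ≤ K := by positivity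
  have hγ01 : ∀ i, ∀ x ∈ S, |γ i x| ≤ 1 := by
    intro i x hx
    obtain ⟨h1, h2⟩ := hγ i x hx
    rw [abs_le]; exact ⟨by linarith, h2⟩
  have hlamb : ∀ x ∈ S, |lam x| ≤ M := by
    intro x hx; obtain ⟨h1, h2⟩ := hbd x hx; rw [abs_le]; constructor <;> nlinarith
  have hlamb' : ∀ x ∈ S, |lam' x| ≤ M := by
    intro x hx; obtain ⟨h1, h2⟩ := hbd' x hx; rw [abs_le]; constructor <;> nlinarith
  -- measurability of the log part
  have hmlog : Measurable fun x => Real.log (lam' x / lam x) :=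
    Real.measurable_log.comp (hml'.div hml)
  -- generic integrability helper
  have intOn : ∀ (f : (Fin d → ℝ) → ℝ) (C : ℝ), Measurable f → (∀ x ∈ S, |f x| ≤ C) →
      IntegrableOn f S volume := by
    intro f C hf hC
    refine Measure.integrableOn_of_bounded (M := C) hSfin hf.aestronglyMeasurable ?_
    exact (ae_restrict_iff' hS).2 (Filter.Eventually.of_forall (fun x hx => by
      simpa [Real.norm_eq_abs] using hC x hx))
  have I1 : ∀ i, IntegrableOn (fun x => γ i x * (lam x - lam' x)) S volume := by
    intro i
    refine intOn _ (1 * (M + M)) ((hγm i).mul (hml.sub hml')) (fun x hx => ?_)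
    rw [abs_mul]
    refine mul_le_mul (hγ01 i x hx) ?_ (abs_nonneg _) zero_le_one
    calc |lam x - lam' x| ≤ |lam x| + |lam' x| := abs_sub _ _
      _ ≤ M + M := add_le_add (hlamb x hx) (hlamb' x hx)
  have I2 : ∀ i, IntegrableOn (fun x => γ i x * lam' x * Real.log (lam' x / lam x)) S volume := by
    intro i
    refine intOn _ (1 * M * K) (((hγm i).mul hml').mul hmlog) (fun x hx => ?_)
    rw [abs_mul, abs_mul]
    exact mul_le_mul (mul_le_mul (hγ01 i x hx) (hlamb' x hx) (abs_nonneg _) zero_le_one)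
      (hK x hx) (abs_nonneg _) (by nlinarith [hK0])
  have I3 : ∀ i, IntegrableOn (fun x => γ i x * (Real.sqrt (lam x) - Real.sqrt (lam' x)) ^ 2) S volume := by
    intro i
    refine intOn _ (1 * (Real.sqrt M + Real.sqrt M) ^ 2)
      ((hγm i).mul (((Real.continuous_sqrt.measurable.comp hml).sub
        (Real.continuous_sqrt.measurable.comp hml')).pow_const 2)) (fun x hx => ?_)
    rw [abs_mul]
    refine mul_le_mul (hγ01 i x hx) ?_ (abs_nonneg _) zero_le_one
    rw [abs_pow]
    have : |Real.sqrt (lam x) - Real.sqrt (lam' x)| ≤ Real.sqrt M + Real.sqrt M := by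
      calc |Real.sqrt (lam x) - Real.sqrt (lam' x)|
          ≤ |Real.sqrt (lam x)| + |Real.sqrt (lam' x)| := abs_sub _ _
        _ ≤ Real.sqrt M + Real.sqrt M := by
            refine add_le_add ?_ ?_
            · rw [abs_of_nonneg (Real.sqrt_nonneg _)]
              exact Real.sqrt_le_sqrt (le_trans (le_abs_self _) (hlamb x hx))
            · rw [abs_of_nonneg (Real.sqrt_nonneg _)]
              exact Real.sqrt_le_sqrt (le_trans (le_abs_self _) (hlamb' x hx))
    exact pow_le_pow_left₀ (abs_nonneg _) this 2
  have I4 : ∀ i, IntegrableOn (fun x => γ i x * lam' x * Real.log (lam' x / lam x) ^ 2) S volume := by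
    intro i
    refine intOn _ (1 * M * K ^ 2) (((hγm i).mul hml').mul (hmlog.pow_const 2)) (fun x hx => ?_)
    rw [abs_mul, abs_mul, abs_pow]
    exact mul_le_mul (mul_le_mul (hγ01 i x hx) (hlamb' x hx) (abs_nonneg _) zero_le_one)
      (pow_le_pow_left₀ (abs_nonneg _) (hK x hx) 2) (by positivity) (by nlinarith [hK0])
  -- per-i inequality
  have key : ∀ i : Fin n,
      ((∫ x in S, γ i x * (lam x - lam' x)) +
        ∫ x in S, γ i x * lam' x * Real.log (lam' x / lam x))
      ≤ 3 * (∫ x in S, γ i x * (Real.sqrt (lam x) - Real.sqrt (lam' x)) ^ 2) +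
        ∫ x in S, γ i x * lam' x * Real.log (lam' x / lam x) ^ 2 := by
    intro i
    rw [← integral_add (I1 i) (I2 i), ← integral_const_mul,
      ← integral_add ((I3 i).const_mul 3) (I4 i)]
    refine setIntegral_mono_on ((I1 i).add (I2 i)) (((I3 i).const_mul 3).add (I4 i)) hS ?_
    intro x hx
    obtain ⟨h1, h2⟩ := hbd x hx
    obtain ⟨h1', h2'⟩ := hbd' x hx
    have hlx : 0 < lam x := lt_of_lt_of_le hm h1
    have hlx' : 0 < lam' x := lt_of_lt_of_le hm h1'
    have hg0 : 0 ≤ γ i x := (hγ i x hx).1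
    exact ptwise (lam x) (lam' x) (γ i x) hlx hlx' hg0
  have hsum : ∑ i : Fin n,
      ((∫ x in S, γ i x * (lam x - lam' x)) +
        ∫ x in S, γ i x * lam' x * Real.log (lam' x / lam x))
      ≤ ∑ i : Fin n,
        (3 * (∫ x in S, γ i x * (Real.sqrt (lam x) - Real.sqrt (lam' x)) ^ 2) +
          ∫ x in S, γ i x * lam' x * Real.log (lam' x / lam x) ^ 2) :=
    Finset.sum_le_sum (fun i _ => key i)
  have hn' : (0 : ℝ) ≤ 1 / n := by positivity
  calc (1 / n : ℝ) * ∑ i : Fin n,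
        ((∫ x in S, γ i x * (lam x - lam' x)) +
          ∫ x in S, γ i x * lam' x * Real.log (lam' x / lam x))
      ≤ (1 / n : ℝ) * ∑ i : Fin n,
        (3 * (∫ x in S, γ i x * (Real.sqrt (lam x) - Real.sqrt (lam' x)) ^ 2) +
          ∫ x in S, γ i x * lam' x * Real.log (lam' x / lam x) ^ 2) :=
        mul_le_mul_of_nonneg_left hsum hn'
    _ = (3 / n : ℝ) * ∑ i : Fin n,
          (∫ x in S, γ i x * (Real.sqrt (lam x) - Real.sqrt (lam' x)) ^ 2) +
        (1 / n : ℝ) * ∑ i : Fin n,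
          ∫ x in S, γ i x * lam' x * Real.log (lam' x / lam x) ^ 2 := by
        rw [Finset.sum_add_distrib, ← Finset.mul_sum]; ring
end
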